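/- Let {Λ_i}_{i∈ℕ} be closed cones in ℝⁿ satisfying the normal qualification condition, and let Λ := ⋂_{i=1}^∞ Λ_i. Then int N̂(0;Λ) ⊆ { Σ_{i=1}^∞ x*_i : x*_i ∈ N(0;Λ_i), the series converges }. -/

import Mathlib

open Filter Topology

variable {E : Type*} [NormedAddCommGroup E] [InnerProductSpace ℝ E]

/-- `Λ` is a cone: closed under multiplication by nonnegative scalars. -/
def IsConeSet (Λ : Set E) : Prop := ∀ t : ℝ, 0 ≤ t → ∀ v ∈ Λ, t • v ∈ Λ

/-- The translate `S - a = {x | x + a ∈ S}`. -/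
def Set.translate (S : Set E) (a : E) : Set E := {x | x + a ∈ S}

/-- `v` is a Fréchet `ε`-normal to `Ω` at `x₀` (normals identified with vectors
via the inner ℝ product). -/
def IsEpsNormal (ε : ℝ) (v : E) (Ω : Set E) (x₀ : E) : Prop :=
  ∀ η > 0, ∃ δ > 0, ∀ x ∈ Ω, ‖x - x₀‖ < δ → (inner ℝ v (x - x₀) : ℝ) ≤ (ε + η) * ‖x - x₀‖

/-- The Fréchet (regular) normal cone to `Ω` at `x₀`. -/
def frechetNormalCone (Ω : Set E) (x₀ : E) : Set E := {v | IsEpsNormal 0 v Ω x₀}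

/-- The Mordukhovich limiting normal cone to `Ω` at `x₀`: limits of Fréchet
`ε_k`-normals at points `x_k → x₀` of `Ω` with `ε_k ↓ 0`. -/
def limitingNormalCone (Ω : Set E) (x₀ : E) : Set E :=
  {v | ∃ (ε : ℕ → ℝ) (x : ℕ → E) (w : ℕ → E),
    (∀ k, 0 ≤ ε k) ∧ Tendsto ε atTop (𝓝 0) ∧
    (∀ k, x k ∈ Ω) ∧ Tendsto x atTop (𝓝 x₀) ∧
    Tendsto w atTop (𝓝 v) ∧ (∀ k, IsEpsNormal (ε k) (w k) Ω (x k))}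

/-- The normal qualification condition for a countable system of cones. -/
def NormalQualification (n : ℕ) (Λ : ℕ → Set (EuclideanSpace ℝ (Fin n))) : Prop :=
  ∀ x : ℕ → EuclideanSpace ℝ (Fin n),
    (∀ i, x i ∈ limitingNormalCone (Λ i) 0) → HasSum x 0 → ∀ i, x i = 0

open Metric

/-- On a cone, Fréchet normals at the origin satisfy the polar inequality. -/
lemma polar_of_frechet {Λ : Set E} (hcone : IsConeSet Λ) {v : E}
    (hv : v ∈ frechetNormalCone Λ 0) {x : E} (hx : x ∈ Λ) : (inner ℝ v x : ℝ) ≤ 0 := by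
  by_contra hpos
  push_neg at hpos
  have hxne : x ≠ 0 := by rintro rfl; simp at hpos
  have hxn : (0:ℝ) < ‖x‖ := norm_pos_iff.2 hxne
  set η : ℝ := (inner ℝ v x : ℝ) / (2 * ‖x‖) with hη
  have hηpos : 0 < η := by positivity
  obtain ⟨δ, hδ, hδ'⟩ := hv η hηpos
  set t : ℝ := δ / (2 * ‖x‖) with ht
  have htpos : 0 < t := by positivity
  have htx : t • x ∈ Λ := hcone t htpos.le x hx
  have htxn : t * ‖x‖ = δ / 2 := by rw [ht]; field_simp
  have hnorm : ‖t • x - 0‖ < δ := by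
    rw [sub_zero, norm_smul, Real.norm_eq_abs, abs_of_pos htpos, htxn]
    linarith
  have := hδ' (t • x) htx hnorm
  rw [sub_zero, real_inner_smul_right, norm_smul, Real.norm_eq_abs, abs_of_pos htpos,
    zero_add] at this
  have h2 : (inner ℝ v x : ℝ) ≤ η * ‖x‖ := le_of_mul_le_mul_left (by nlinarith) htpos
  rw [hη] at h2
  have h3 : (inner ℝ v x : ℝ) / (2 * ‖x‖) * ‖x‖ = (inner ℝ v x : ℝ) / 2 := by
    field_simp
  nlinarith [hpos]

/-- Nonnegative multiples of proximal normals are Fréchet normals. -/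
lemma prox_isEpsNormal {Λ : Set E} {x p : E} (hmin : ∀ z ∈ Λ, ‖x - p‖ ≤ ‖x - z‖)
    {t : ℝ} (ht : 0 ≤ t) : IsEpsNormal 0 (t • (x - p)) Λ p := by
  intro η hη
  have htpos : (0:ℝ) < t + 1 := by linarith
  refine ⟨2 * η / (t + 1), by positivity, fun z hz hzd => ?_⟩
  have key : (inner ℝ (x - p) (z - p) : ℝ) ≤ ‖z - p‖ ^ 2 / 2 := by
    have h1 : ‖x - p‖ ≤ ‖x - z‖ := hmin z hz
    have h1' : ‖x - p‖ ^ 2 ≤ ‖x - z‖ ^ 2 := by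
      nlinarith [norm_nonneg (x - p), norm_nonneg (x - z)]
    have h2 : ‖x - z‖ ^ 2 = ‖x - p‖ ^ 2 - 2 * (inner ℝ (x - p) (z - p) : ℝ) + ‖z - p‖ ^ 2 := by
      have hxz : x - z = (x - p) - (z - p) := by abel
      rw [hxz, norm_sub_sq_real]; try ring
    nlinarith
  rw [real_inner_smul_left, zero_add]
  have hzn : (0:ℝ) ≤ ‖z - p‖ := norm_nonneg _
  have h4 : ‖z - p‖ * (t + 1) < 2 * η := (lt_div_iff₀ htpos).1 hzd
  have h5 : t * (inner ℝ (x - p) (z - p) : ℝ) ≤ t * (‖z - p‖ ^ 2 / 2) :=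
    mul_le_mul_of_nonneg_left key ht
  nlinarith [mul_le_mul_of_nonneg_right h4.le hzn]

lemma infDist_smul_cone [ProperSpace E] {Λ : Set E} (hcone : IsConeSet Λ)
    (hclosed : IsClosed Λ) (h0 : (0:E) ∈ Λ) {t : ℝ} (ht : 0 ≤ t) (x : E) :
    infDist (t • x) Λ = t * infDist x Λ := by
  have hne : Λ.Nonempty := ⟨0, h0⟩
  have key : ∀ s : ℝ, 0 < s → ∀ y : E, s * infDist y Λ ≤ infDist (s • y) Λ := by
    intro s hs y
    obtain ⟨p, hp, hd⟩ := hclosed.exists_infDist_eq_dist hne (s • y)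
    have hmem : s⁻¹ • p ∈ Λ := hcone s⁻¹ (by positivity) p hp
    have h1 : infDist y Λ ≤ dist y (s⁻¹ • p) := infDist_le_dist_of_mem hmem
    have h2 : dist (s • y) p = s * dist y (s⁻¹ • p) := by
      rw [dist_eq_norm, dist_eq_norm]
      rw [show s • y - p = s • (y - s⁻¹ • p) by rw [smul_sub, smul_inv_smul₀ hs.ne']]
      rw [norm_smul, Real.norm_eq_abs, abs_of_pos hs]
    rw [hd, h2]
    exact mul_le_mul_of_nonneg_left h1 hs.le
  rcases eq_or_lt_of_le ht with h | h
  · simp [← h, infDist_zero_of_mem h0]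
  · refine le_antisymm ?_ (key t h x)
    have := key t⁻¹ (by positivity) (t • x)
    rw [inv_smul_smul₀ h.ne'] at this
    calc infDist (t • x) Λ = t * (t⁻¹ * infDist (t • x) Λ) := by field_simp
    _ ≤ t * infDist x Λ := mul_le_mul_of_nonneg_left this h.le


set_option maxHeartbeats 1000000 in
/-- The per-`k` penalization construction. -/
lemma key_step (n : ℕ) (Λ : ℕ → Set (EuclideanSpace ℝ (Fin n)))
    (hclosed : ∀ i, IsClosed (Λ i)) (h0 : ∀ i, (0 : EuclideanSpace ℝ (Fin n)) ∈ Λ i)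
    (c : ℕ → ℝ) (hcpos : ∀ i, 0 < c i) (hcgeom : HasSum c 2)
    (v : EuclideanSpace ℝ (Fin n)) (γ M : ℝ) (hγpos : 0 < γ) (hMdef : M = 2 * ‖v‖ / γ)
    (h : EuclideanSpace ℝ (Fin n) → ℝ)
    (hhdef : ∀ x, h x = ∑' i, c i * infDist x (Λ i) ^ 2)
    (hcont : Continuous h) (hhnn : ∀ x, 0 ≤ h x) (hh0 : h 0 = 0)
    (hsummable : ∀ x : EuclideanSpace ℝ (Fin n), Summable fun i => c i * infDist x (Λ i) ^ 2)
    (hγ : ∀ x : EuclideanSpace ℝ (Fin n), 0 ≤ (inner ℝ v x : ℝ) → γ * ‖x‖ ^ 2 ≤ h x)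
    (k : ℕ) :
    ∃ (xb : EuclideanSpace ℝ (Fin n)) (p : ℕ → EuclideanSpace ℝ (Fin n)),
      (∀ i, p i ∈ Λ i) ∧ (∀ i, ‖p i‖ ≤ 2 * M / (k + 1)) ∧ ‖xb‖ ≤ M / (k + 1) ∧
      (∀ i, IsEpsNormal 0 (((k + 1 : ℝ) * c i) • (xb - p i)) (Λ i) (p i)) ∧
      (∀ i, ‖((k + 1 : ℝ) * c i) • (xb - p i)‖ ≤ c i * M) ∧
      HasSum (fun i => ((k + 1 : ℝ) * c i) • (xb - p i)) (v - xb) := by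
  have hc : Summable c := hcgeom.summable
  have hcsum : ∑' i, c i = 2 := hcgeom.tsum_eq
  have hMnn : 0 ≤ M := by rw [hMdef]; exact div_nonneg (by positivity) hγpos.le
  have hDle : ∀ i (x : EuclideanSpace ℝ (Fin n)), infDist x (Λ i) ≤ ‖x‖ := by
    intro i x
    have := infDist_le_dist_of_mem (h0 i) (x := x)
    rwa [dist_zero_right] at this
  set R : ℝ := 6 * ‖v‖ + 1 with hRdef
  have hRpos : 0 < R := by positivity
  set K : ℝ := (k : ℝ) + 1 with hKdef
  have hKpos : (0 : ℝ) < K := by positivity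
  set φ : EuclideanSpace ℝ (Fin n) → ℝ :=
    fun x => -(inner ℝ v x : ℝ) + K / 2 * h x + ‖x‖ ^ 2 / 2 with hφdef
  have hφcont : Continuous φ := by
    refine Continuous.add (Continuous.add ?_ ?_) ?_
    · exact (Continuous.inner continuous_const continuous_id).neg
    · exact continuous_const.mul hcont
    · exact (continuous_norm.pow 2).div_const 2
  obtain ⟨xb, hxbmem, hxbmin⟩ :=
    (isCompact_closedBall (0 : EuclideanSpace ℝ (Fin n)) R).exists_isMinOn
      ⟨0, mem_closedBall_self hRpos.le⟩ hφcont.continuousOn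
  have hφ0 : φ 0 = 0 := by simp [hφdef, hh0]
  have hφxb : φ xb ≤ 0 := by
    have h' : φ xb ≤ φ 0 := hxbmin (mem_closedBall_self hRpos.le)
    rwa [hφ0] at h'
  have hφxb' : -(inner ℝ v xb : ℝ) + K / 2 * h xb + ‖xb‖ ^ 2 / 2 ≤ 0 := hφxb
  have hvxb_ineq : ‖xb‖ ^ 2 / 2 + K / 2 * h xb ≤ (inner ℝ v xb : ℝ) := by linarith
  have hK2 : (0:ℝ) ≤ K / 2 := by linarith
  have hKh : 0 ≤ K / 2 * h xb := mul_nonneg hK2 (hhnn xb)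
  have hCS : (inner ℝ v xb : ℝ) ≤ ‖v‖ * ‖xb‖ := real_inner_le_norm v xb
  have hxvnn : 0 ≤ (inner ℝ v xb : ℝ) := by nlinarith [sq_nonneg ‖xb‖]
  have hxb2v : ‖xb‖ ≤ 2 * ‖v‖ := by
    nlinarith [norm_nonneg xb, norm_nonneg v]
  have hKxb : K * ‖xb‖ ≤ M := by
    have hγxb := hγ xb hxvnn
    have hmul := mul_le_mul_of_nonneg_left hγxb hK2
    have h7 : (K * γ * ‖xb‖) * ‖xb‖ ≤ (2 * ‖v‖) * ‖xb‖ := by nlinarith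
    rcases eq_or_lt_of_le (norm_nonneg xb) with hz | hz
    · rw [← hz, mul_zero]; exact hMnn
    · have h8 : K * γ * ‖xb‖ ≤ 2 * ‖v‖ := le_of_mul_le_mul_right h7 hz
      rw [hMdef, le_div_iff₀ hγpos]
      nlinarith
  -- nearest points
  have hnear : ∀ i, ∃ pp, pp ∈ Λ i ∧ infDist xb (Λ i) = dist xb pp := fun i =>
    (hclosed i).exists_infDist_eq_dist ⟨0, h0 i⟩ xb
  choose p hpmem hpd using hnear
  have hdi : ∀ i, ‖xb - p i‖ = infDist xb (Λ i) := fun i =>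
    ((hpd i).trans (dist_eq_norm _ _)).symm
  have hdle : ∀ i, ‖xb - p i‖ ≤ ‖xb‖ := fun i => by rw [hdi i]; exact hDle i xb
  have hpnorm : ∀ i, ‖p i‖ ≤ 2 * ‖xb‖ := by
    intro i
    have h1 : ‖p i‖ = ‖xb - (xb - p i)‖ := by congr 1; abel
    have h2 : ‖xb - (xb - p i)‖ ≤ ‖xb‖ + ‖xb - p i‖ := norm_sub_le _ _
    have := hdle i
    linarith [h1 ▸ h2]
  have hmin' : ∀ i, ∀ z ∈ Λ i, ‖xb - p i‖ ≤ ‖xb - z‖ := by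
    intro i z hz
    rw [← dist_eq_norm, ← dist_eq_norm, ← hpd i]
    exact infDist_le_dist_of_mem hz
  -- the series of nearest points
  have hnb : ∀ i, ‖c i • p i‖ ≤ c i * (2 * ‖xb‖) := by
    intro i
    rw [norm_smul, Real.norm_eq_abs, abs_of_pos (hcpos i)]
    exact mul_le_mul_of_nonneg_left (hpnorm i) (hcpos i).le
  have hsumcp : Summable (fun i => c i • p i) :=
    Summable.of_norm (Summable.of_nonneg_of_le (fun i => norm_nonneg _) hnb
      (hc.mul_right (2 * ‖xb‖)))
  set q : EuclideanSpace ℝ (Fin n) := ∑' i, c i • p i with hqdef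
  have hq : HasSum (fun i => c i • p i) q := hsumcp.hasSum
  have hqnorm : ‖q‖ ≤ 4 * ‖xb‖ := by
    have hns : Summable (fun i => ‖c i • p i‖) :=
      Summable.of_nonneg_of_le (fun i => norm_nonneg _) hnb (hc.mul_right (2 * ‖xb‖))
    have h1 : ‖q‖ ≤ ∑' i, ‖c i • p i‖ := norm_tsum_le_tsum_norm hns
    have h2 : ∑' i, ‖c i • p i‖ ≤ ∑' i, c i * (2 * ‖xb‖) :=
      Summable.tsum_le_tsum hnb hns (hc.mul_right _)
    rw [tsum_mul_right, hcsum] at h2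
    linarith
  -- the smooth majorant and its expansion
  set S0 : ℝ := ∑' i, c i * ‖p i‖ ^ 2 with hS0def
  have hS0sum : Summable (fun i => c i * ‖p i‖ ^ 2) := by
    refine Summable.of_nonneg_of_le (fun i => mul_nonneg (hcpos i).le (by positivity)) (fun i => ?_)
      (hc.mul_right ((2 * ‖xb‖) ^ 2))
    exact mul_le_mul_of_nonneg_left
      (pow_le_pow_left₀ (norm_nonneg _) (hpnorm i) 2) (hcpos i).le
  set T : EuclideanSpace ℝ (Fin n) → ℝ := fun y => ∑' i, c i * ‖y - p i‖ ^ 2 with hTdef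
  have hTsum : ∀ y : EuclideanSpace ℝ (Fin n), Summable (fun i => c i * ‖y - p i‖ ^ 2) := by
    intro y
    refine Summable.of_nonneg_of_le (fun i => mul_nonneg (hcpos i).le (by positivity)) (fun i => ?_)
      (hc.mul_right ((‖y‖ + 2 * ‖xb‖) ^ 2))
    refine mul_le_mul_of_nonneg_left ?_ (hcpos i).le
    have hb : ‖y - p i‖ ≤ ‖y‖ + 2 * ‖xb‖ :=
      le_trans (norm_sub_le _ _) (by linarith [hpnorm i])
    exact pow_le_pow_left₀ (norm_nonneg _) hb 2
  have hinner : ∀ y : EuclideanSpace ℝ (Fin n),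
      HasSum (fun i => c i * (inner ℝ y (p i) : ℝ)) ((inner ℝ y q : ℝ)) := by
    intro y
    have := hq.mapL (innerSL ℝ y)
    simpa [real_inner_smul_right] using this
  have hTexp : ∀ y : EuclideanSpace ℝ (Fin n),
      T y = 2 * ‖y‖ ^ 2 - 2 * (inner ℝ y q : ℝ) + S0 := by
    intro y
    have hterm : ∀ i, c i * ‖y - p i‖ ^ 2
        = (c i * ‖y‖ ^ 2 - 2 * (c i * (inner ℝ y (p i) : ℝ))) + c i * ‖p i‖ ^ 2 := by
      intro i
      rw [norm_sub_sq_real]; ring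
    have hs2 : Summable (fun i => 2 * (c i * (inner ℝ y (p i) : ℝ))) :=
      (hinner y).summable.mul_left 2
    have hs1 : Summable (fun i => c i * ‖y‖ ^ 2) := hc.mul_right _
    calc T y = ∑' i, ((c i * ‖y‖ ^ 2 - 2 * (c i * (inner ℝ y (p i) : ℝ))) + c i * ‖p i‖ ^ 2) :=
          tsum_congr hterm
      _ = (∑' i, (c i * ‖y‖ ^ 2 - 2 * (c i * (inner ℝ y (p i) : ℝ)))) + S0 :=
          Summable.tsum_add (hs1.sub hs2) hS0sum
      _ = ((∑' i, c i * ‖y‖ ^ 2) - ∑' i, 2 * (c i * (inner ℝ y (p i) : ℝ))) + S0 := by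
          rw [Summable.tsum_sub hs1 hs2]
      _ = 2 * ‖y‖ ^ 2 - 2 * (inner ℝ y q : ℝ) + S0 := by
          rw [tsum_mul_right, hcsum, tsum_mul_left, (hinner y).tsum_eq]
  have hTxb : T xb = h xb := by
    rw [hhdef xb]
    exact tsum_congr fun i => by rw [hdi i]
  -- the quadratic minimum
  set m : EuclideanSpace ℝ (Fin n) := ((2 * K + 1 : ℝ))⁻¹ • (v + K • q) with hmdef
  have hApos : (0:ℝ) < 2 * K + 1 := by linarith
  have hAm : ((2 * K + 1 : ℝ)) • m = v + K • q := by
    rw [hmdef, smul_inv_smul₀ hApos.ne']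
  have hmnorm : ‖m‖ ≤ 5 * ‖v‖ := by
    rw [hmdef, norm_smul, Real.norm_eq_abs, abs_of_pos (inv_pos.2 hApos)]
    have h1 : ‖v + K • q‖ ≤ ‖v‖ + K * ‖q‖ := by
      refine le_trans (norm_add_le _ _) ?_
      rw [norm_smul, Real.norm_eq_abs, abs_of_pos hKpos]
    have h2 : K * ‖q‖ ≤ K * (4 * ‖xb‖) := mul_le_mul_of_nonneg_left hqnorm hKpos.le
    rw [inv_mul_le_iff₀ hApos]
    nlinarith [norm_nonneg v, norm_nonneg q]
  have hφm : φ xb ≤ φ m := by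
    refine hxbmin (mem_closedBall_zero_iff.2 ?_)
    rw [hRdef]; linarith
  have hφT : ∀ y : EuclideanSpace ℝ (Fin n),
      φ y ≤ -(inner ℝ v y : ℝ) + K / 2 * T y + ‖y‖ ^ 2 / 2 := by
    intro y
    have hhT : h y ≤ T y := by
      rw [hhdef y]
      refine Summable.tsum_le_tsum (fun i => ?_) (hsummable y) (hTsum y)
      refine mul_le_mul_of_nonneg_left ?_ (hcpos i).le
      have h1 : infDist y (Λ i) ≤ ‖y - p i‖ := by
        have := infDist_le_dist_of_mem (hpmem i) (x := y)
        rwa [dist_eq_norm] at this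
      have h2 : (0:ℝ) ≤ infDist y (Λ i) := infDist_nonneg
      nlinarith
    have hmul : K / 2 * h y ≤ K / 2 * T y := mul_le_mul_of_nonneg_left hhT hK2
    show -(inner ℝ v y : ℝ) + K / 2 * h y + ‖y‖ ^ 2 / 2 ≤ _
    linarith
  have hquad : ∀ y : EuclideanSpace ℝ (Fin n),
      -(inner ℝ v y : ℝ) + K / 2 * T y + ‖y‖ ^ 2 / 2
        = (2 * K + 1) / 2 * ‖y - m‖ ^ 2 + (K / 2 * S0 - (2 * K + 1) / 2 * ‖m‖ ^ 2) := by
    intro y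
    rw [hTexp y]
    have hy : ‖y - m‖ ^ 2 = ‖y‖ ^ 2 - 2 * (inner ℝ y m : ℝ) + ‖m‖ ^ 2 := by
      rw [norm_sub_sq_real]; try ring
    have hym : (inner ℝ y ((2 * K + 1 : ℝ) • m) : ℝ) = (2 * K + 1) * (inner ℝ y m : ℝ) :=
      real_inner_smul_right _ _ _
    have hym2 : (2 * K + 1) * (inner ℝ y m : ℝ) = (inner ℝ y v : ℝ) + K * (inner ℝ y q : ℝ) := by
      rw [← hym, hAm, inner_add_right, real_inner_smul_right]
    have hsymm : (inner ℝ v y : ℝ) = (inner ℝ y v : ℝ) := real_inner_comm y v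
    linear_combination (-((2 * K + 1) / 2)) * hy + hym2 - hsymm
  have hxm : xb = m := by
    have e1 := hquad xb
    have e2 := hquad m
    have h1 : -(inner ℝ v xb : ℝ) + K / 2 * T xb + ‖xb‖ ^ 2 / 2 = φ xb := by
      show _ = -(inner ℝ v xb : ℝ) + K / 2 * h xb + ‖xb‖ ^ 2 / 2
      rw [hTxb]
    have hc0 : φ xb = (2 * K + 1) / 2 * ‖xb - m‖ ^ 2
        + (K / 2 * S0 - (2 * K + 1) / 2 * ‖m‖ ^ 2) := by rw [← h1, e1]
    have hc1 : φ m ≤ K / 2 * S0 - (2 * K + 1) / 2 * ‖m‖ ^ 2 := by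
      have h2 := hφT m
      rw [e2] at h2
      simpa using h2
    clear_value φ T S0 q m
    have h3 : (2 * K + 1) / 2 * ‖xb - m‖ ^ 2 ≤ 0 := by linarith [hφm, hc0, hc1]
    have h4 : ‖xb - m‖ ^ 2 ≤ 0 := by nlinarith [sq_nonneg ‖xb - m‖]
    have h5 : ‖xb - m‖ = 0 := by nlinarith [norm_nonneg (xb - m)]
    exact sub_eq_zero.1 (norm_eq_zero.1 h5)
  -- conclusion of the per-k construction
  have hAxb : ((2 * K + 1 : ℝ)) • xb = v + K • q := by rw [hxm]; exact hAm
  have hval : (2 * K : ℝ) • xb - K • q = v - xb := by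
    rw [sub_eq_sub_iff_add_eq_add]
    calc (2 * K : ℝ) • xb + xb = ((2 * K + 1 : ℝ)) • xb := by
          rw [add_smul, one_smul]
      _ = v + K • q := hAxb
  have hy1 : HasSum (fun i => c i • xb) ((2 : ℝ) • xb) := hcgeom.smul_const xb
  have hy2 : HasSum (fun i => K • (c i • xb)) (K • (2 : ℝ) • xb) := hy1.const_smul K
  have hy3 : HasSum (fun i => K • (c i • p i)) (K • q) := hq.const_smul K
  have hy4 := hy2.sub hy3
  have hy5 : HasSum (fun i => ((k + 1 : ℝ) * c i) • (xb - p i)) (v - xb) := by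
    have hfun : (fun i => ((k + 1 : ℝ) * c i) • (xb - p i))
        = fun i => K • (c i • xb) - K • (c i • p i) := by
      funext i
      rw [smul_sub, smul_smul, smul_smul, hKdef]
    have hvv : K • (2 : ℝ) • xb - K • q = v - xb := by
      rw [smul_smul, show K * 2 = 2 * K by ring]
      exact hval
    rw [hfun, ← hvv]
    exact hy4
  have hxbM : ‖xb‖ ≤ M / (k + 1) := by
    rw [le_div_iff₀ (by positivity : (0:ℝ) < (k:ℝ) + 1)]
    calc ‖xb‖ * ((k:ℝ) + 1) = K * ‖xb‖ := by rw [hKdef]; ring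
      _ ≤ M := hKxb
  refine ⟨xb, p, hpmem, fun i => ?_, hxbM, fun i => ?_, fun i => ?_, hy5⟩
  · calc ‖p i‖ ≤ 2 * ‖xb‖ := hpnorm i
      _ ≤ 2 * (M / (k + 1)) := by linarith [hxbM]
      _ = 2 * M / (k + 1) := by ring
  · exact prox_isEpsNormal (hmin' i) (mul_nonneg (by positivity : (0:ℝ) ≤ (k + 1 : ℝ)) (hcpos i).le)
  · rw [norm_smul, Real.norm_eq_abs,
      abs_of_pos (mul_pos (by positivity : (0:ℝ) < (k + 1 : ℝ)) (hcpos i))]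
    calc ((k + 1 : ℝ) * c i) * ‖xb - p i‖ ≤ ((k + 1 : ℝ) * c i) * ‖xb‖ :=
          mul_le_mul_of_nonneg_left (hdle i)
            (mul_nonneg (by positivity : (0:ℝ) ≤ (k + 1 : ℝ)) (hcpos i).le)
      _ = c i * (K * ‖xb‖) := by rw [hKdef]; ring
      _ ≤ c i * M := mul_le_mul_of_nonneg_left hKxb (hcpos i).le

set_option maxHeartbeats 1000000 in
/-- interior of the Fréchet normal cone to a countable intersection. -/
theorem interior_frechet_normal_cone (n : ℕ) (Λ : ℕ → Set (EuclideanSpace ℝ (Fin n)))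
    (hcone : ∀ i, IsConeSet (Λ i)) (hclosed : ∀ i, IsClosed (Λ i))
    (h0 : ∀ i, (0 : EuclideanSpace ℝ (Fin n)) ∈ Λ i)
    (hqc : NormalQualification n Λ) :
    interior (frechetNormalCone (⋂ i, Λ i) 0) ⊆
      {v | ∃ x : ℕ → EuclideanSpace ℝ (Fin n),
        (∀ i, x i ∈ limitingNormalCone (Λ i) 0) ∧ HasSum x v} := by
  classical
  intro v hv
  set Lam : Set (EuclideanSpace ℝ (Fin n)) := ⋂ i, Λ i with hLamdef
  have hLcone : IsConeSet Lam := fun t ht z hz =>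
    Set.mem_iInter.2 fun i => hcone i t ht z (Set.mem_iInter.1 hz i)
  -- strict polar inequality on the intersection
  obtain ⟨ε, hεpos, hball⟩ := Metric.isOpen_iff.1 isOpen_interior v hv
  set r : ℝ := ε / 2 with hrdef
  have hrpos : 0 < r := by positivity
  have hstrict : ∀ x ∈ Lam, (inner ℝ v x : ℝ) ≤ -(r * ‖x‖) := by
    intro x hx
    rcases eq_or_ne x 0 with rfl | hxne
    · simp
    · have hxn : (0:ℝ) < ‖x‖ := norm_pos_iff.2 hxne
      have hu : v + (r / ‖x‖) • x ∈ Metric.ball v ε := by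
        rw [Metric.mem_ball, dist_eq_norm, add_sub_cancel_left, norm_smul,
          Real.norm_eq_abs, abs_of_pos (by positivity), div_mul_cancel₀ _ hxn.ne']
        linarith
      have hmem := interior_subset (hball hu)
      have hpolar := polar_of_frechet hLcone hmem hx
      rw [inner_add_left, real_inner_smul_left, real_inner_self_eq_norm_sq] at hpolar
      have heq : r / ‖x‖ * ‖x‖ ^ 2 = r * ‖x‖ := by field_simp
      nlinarith
  -- geometric weights
  set c : ℕ → ℝ := fun i => (1/2 : ℝ) ^ i with hcdef
  have hcpos : ∀ i, 0 < c i := fun i => by positivity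
  have hc : Summable c := summable_geometric_of_lt_one (by norm_num) (by norm_num)
  have hcgeom : HasSum c 2 := by
    have := hasSum_geometric_of_lt_one (r := (1/2:ℝ)) (by norm_num) (by norm_num)
    norm_num at this
    exact this
  have hcsum : ∑' i, c i = 2 := hcgeom.tsum_eq
  -- the weighted squared-distance function
  set D : ℕ → EuclideanSpace ℝ (Fin n) → ℝ := fun i x => infDist x (Λ i) with hDdef
  have hDnn : ∀ i x, 0 ≤ D i x := fun i x => infDist_nonneg
  have hDle : ∀ i x, D i x ≤ ‖x‖ := by
    intro i x
    have := infDist_le_dist_of_mem (h0 i) (x := x)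
    rwa [dist_zero_right] at this
  have hDlip : ∀ i (x y : EuclideanSpace ℝ (Fin n)), |D i x - D i y| ≤ ‖x - y‖ := by
    intro i x y
    have := (lipschitz_infDist_pt (Λ i)).dist_le_mul x y
    simpa [Real.dist_eq, dist_eq_norm] using this
  set h : EuclideanSpace ℝ (Fin n) → ℝ := fun x => ∑' i, c i * D i x ^ 2 with hhdef
  have hsummable : ∀ x, Summable (fun i => c i * D i x ^ 2) := by
    intro x
    refine Summable.of_nonneg_of_le (fun i => by positivity) (fun i => ?_) (hc.mul_right (‖x‖^2))
    exact mul_le_mul_of_nonneg_left (by nlinarith [hDle i x, hDnn i x, norm_nonneg x]) (hcpos i).le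
  have hhnn : ∀ x, 0 ≤ h x := fun x => tsum_nonneg (fun i => by positivity)
  have hh0 : h 0 = 0 := by
    rw [hhdef]
    have : ∀ i, c i * D i 0 ^ 2 = 0 := by
      intro i
      rw [hDdef]
      simp [infDist_zero_of_mem (h0 i)]
    simp only [this, tsum_zero]
  have hlipb : ∀ x y : EuclideanSpace ℝ (Fin n), |h x - h y| ≤ 2 * ((‖x‖ + ‖y‖) * ‖x - y‖) := by
    intro x y
    have hdiff : ∀ i, |c i * D i x ^ 2 - c i * D i y ^ 2| ≤ c i * ((‖x‖ + ‖y‖) * ‖x - y‖) := by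
      intro i
      rw [← mul_sub, abs_mul, abs_of_pos (hcpos i)]
      refine mul_le_mul_of_nonneg_left ?_ (hcpos i).le
      have hfact : D i x ^ 2 - D i y ^ 2 = (D i x - D i y) * (D i x + D i y) := by ring
      rw [hfact, abs_mul]
      have h1 : |D i x - D i y| ≤ ‖x - y‖ := hDlip i x y
      have h2 : |D i x + D i y| ≤ ‖x‖ + ‖y‖ := by
        rw [abs_of_nonneg (add_nonneg (hDnn i x) (hDnn i y))]
        exact add_le_add (hDle i x) (hDle i y)
      calc |D i x - D i y| * |D i x + D i y| ≤ ‖x - y‖ * (‖x‖ + ‖y‖) :=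
            mul_le_mul h1 h2 (abs_nonneg _) (norm_nonneg _)
        _ = (‖x‖ + ‖y‖) * ‖x - y‖ := by ring
    have hsub : h x - h y = ∑' i, (c i * D i x ^ 2 - c i * D i y ^ 2) :=
      (Summable.tsum_sub (hsummable x) (hsummable y)).symm
    rw [hsub]
    have hs : Summable (fun i => |c i * D i x ^ 2 - c i * D i y ^ 2|) :=
      Summable.of_nonneg_of_le (fun i => abs_nonneg _) hdiff (hc.mul_right _)
    calc |∑' i, (c i * D i x ^ 2 - c i * D i y ^ 2)|
        ≤ ∑' i, |c i * D i x ^ 2 - c i * D i y ^ 2| := by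
          have := norm_tsum_le_tsum_norm (f := fun i => c i * D i x ^ 2 - c i * D i y ^ 2)
            (by simpa [Real.norm_eq_abs] using hs)
          simpa [Real.norm_eq_abs] using this
      _ ≤ ∑' i, c i * ((‖x‖ + ‖y‖) * ‖x - y‖) := Summable.tsum_le_tsum hdiff hs (hc.mul_right _)
      _ = 2 * ((‖x‖ + ‖y‖) * ‖x - y‖) := by rw [tsum_mul_right, hcsum]
  have hcont : Continuous h := by
    rw [Metric.continuous_iff]
    intro x εc hεc
    refine ⟨min 1 (εc / (4 * ‖x‖ + 3)), lt_min one_pos (by positivity), fun y hy => ?_⟩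
    have hy1 : dist y x < 1 := lt_of_lt_of_le hy (min_le_left _ _)
    have hy2 : dist y x < εc / (4 * ‖x‖ + 3) := lt_of_lt_of_le hy (min_le_right _ _)
    have hyn : ‖y‖ ≤ ‖x‖ + 1 := by
      have := norm_sub_norm_le y x
      rw [← dist_eq_norm] at this
      linarith
    have hb := hlipb y x
    rw [Real.dist_eq]
    have hd : ‖y - x‖ = dist y x := (dist_eq_norm y x).symm
    rw [hd] at hb
    have hdnn : 0 ≤ dist y x := dist_nonneg
    have h43 : (0:ℝ) < 4 * ‖x‖ + 3 := by positivity
    have := mul_lt_mul_of_pos_left hy2 h43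
    rw [mul_div_cancel₀ _ h43.ne'] at this
    nlinarith [norm_nonneg x]
  -- positivity away from the intersection and homogeneity
  have hpos' : ∀ x, x ∉ Lam → 0 < h x := by
    intro x hx
    obtain ⟨i, hxi⟩ : ∃ i, x ∉ Λ i := by
      by_contra hall
      push_neg at hall
      exact hx (Set.mem_iInter.2 hall)
    have hDpos : 0 < D i x := by
      rcases lt_or_eq_of_le (hDnn i x) with hlt | heq
      · exact hlt
      · exfalso
        exact hxi (((hclosed i).mem_iff_infDist_zero ⟨0, h0 i⟩).2 heq.symm)
    exact Summable.tsum_pos (hsummable x) (fun j => by positivity) i (by positivity)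
  have hhom : ∀ (t : ℝ), 0 ≤ t → ∀ x, h (t • x) = t ^ 2 * h x := by
    intro t ht x
    rw [hhdef]
    simp only
    rw [← tsum_mul_left]
    refine tsum_congr fun i => ?_
    rw [hDdef]
    simp only
    rw [infDist_smul_cone (hcone i) (hclosed i) (h0 i) ht x]
    ring
  -- the key constant γ
  obtain ⟨γ, hγpos, hγ⟩ : ∃ γ : ℝ, 0 < γ ∧
      ∀ x : EuclideanSpace ℝ (Fin n), 0 ≤ (inner ℝ v x : ℝ) → γ * ‖x‖ ^ 2 ≤ h x := by
    set S : Set (EuclideanSpace ℝ (Fin n)) :=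
      Metric.sphere 0 1 ∩ {x | 0 ≤ (inner ℝ v x : ℝ)} with hSdef
    have hScl : IsClosed {x : EuclideanSpace ℝ (Fin n) | 0 ≤ (inner ℝ v x : ℝ)} :=
      isClosed_le continuous_const (Continuous.inner continuous_const continuous_id)
    have hScpt : IsCompact S := (isCompact_sphere 0 1).inter_right hScl
    have hmem_of : ∀ x : EuclideanSpace ℝ (Fin n), x ≠ 0 → 0 ≤ (inner ℝ v x : ℝ) →
        ‖x‖⁻¹ • x ∈ S := by
      intro x hxne hxnn
      have hxn : (0:ℝ) < ‖x‖ := norm_pos_iff.2 hxne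
      constructor
      · rw [mem_sphere_zero_iff_norm, norm_smul, Real.norm_eq_abs, abs_of_pos (by positivity),
          inv_mul_cancel₀ hxn.ne']
      · rw [Set.mem_setOf_eq, real_inner_smul_right]
        positivity
    rcases S.eq_empty_or_nonempty with hSe | hSne
    · refine ⟨1, one_pos, fun x hx => ?_⟩
      rcases eq_or_ne x 0 with rfl | hxne
      · simp [hh0]
      · exact absurd (hmem_of x hxne hx) (by rw [hSe]; exact Set.notMem_empty _)
    · obtain ⟨u₀, hu₀S, hmin⟩ := hScpt.exists_isMinOn hSne hcont.continuousOn
      have hu₀n : ‖u₀‖ = 1 := mem_sphere_zero_iff_norm.1 hu₀S.1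
      have hu₀pos : 0 < h u₀ := by
        refine hpos' u₀ fun hmem => ?_
        have := hstrict u₀ hmem
        rw [hu₀n] at this
        have := hu₀S.2
        rw [Set.mem_setOf_eq] at this
        nlinarith
      refine ⟨h u₀, hu₀pos, fun x hx => ?_⟩
      rcases eq_or_ne x 0 with rfl | hxne
      · simp [hh0]
      · have hxn : (0:ℝ) < ‖x‖ := norm_pos_iff.2 hxne
        have hu := hmem_of x hxne hx
        have hle : h u₀ ≤ h (‖x‖⁻¹ • x) := hmin hu
        have hx2 : h x = ‖x‖ ^ 2 * h (‖x‖⁻¹ • x) := by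
          have := hhom ‖x‖ (norm_nonneg x) (‖x‖⁻¹ • x)
          rw [smul_smul, mul_inv_cancel₀ hxn.ne', one_smul] at this
          exact this
        rw [hx2]
        nlinarith [sq_nonneg ‖x‖]
  -- apply the per-k construction
  set M : ℝ := 2 * ‖v‖ / γ with hMdef
  have hMnn : 0 ≤ M := div_nonneg (by positivity) hγpos.le
  have key := fun k => key_step n Λ hclosed h0 c hcpos hcgeom v γ M hγpos hMdef h
    (fun x => rfl) hcont hhnn hh0 hsummable hγ k
  choose xb p hpmem hpn hxbn hnormal hynorm hsum using key
  -- compact extraction of a convergent subsequence in the product space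
  have hTcpt : IsCompact (Set.univ.pi
      (fun i : ℕ => Metric.closedBall (0 : EuclideanSpace ℝ (Fin n)) (c i * M))) :=
    isCompact_univ_pi fun i => isCompact_closedBall _ _
  have hFmem : ∀ k : ℕ, (fun i => ((k + 1 : ℝ) * c i) • (xb k - p k i)) ∈ Set.univ.pi
      (fun i : ℕ => Metric.closedBall (0 : EuclideanSpace ℝ (Fin n)) (c i * M)) := by
    intro k
    rw [Set.mem_univ_pi]
    intro i
    exact mem_closedBall_zero_iff.2 (hynorm k i)
  obtain ⟨L, hLmem, σ, hσmono, hσconv⟩ := hTcpt.tendsto_subseq hFmem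
  have hLi : ∀ i, Tendsto (fun j => (((σ j : ℝ) + 1) * c i) • (xb (σ j) - p (σ j) i))
      atTop (𝓝 (L i)) := by
    intro i
    have := (tendsto_pi_nhds.1 hσconv) i
    simpa [Function.comp] using this
  have hσge : ∀ j : ℕ, (j : ℝ) + 1 ≤ (σ j : ℝ) + 1 := by
    intro j
    have hja : j ≤ σ j := hσmono.le_apply
    have : (j : ℝ) ≤ (σ j : ℝ) := by exact_mod_cast hja
    linarith
  have hb2M : Tendsto (fun j : ℕ => 2 * M / ((j : ℝ) + 1)) atTop (𝓝 0) := by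
    have := tendsto_one_div_add_atTop_nhds_zero_nat.const_mul (2 * M)
    simpa [div_eq_mul_inv, one_div] using this
  have hbM : Tendsto (fun j : ℕ => M / ((j : ℝ) + 1)) atTop (𝓝 0) := by
    have := tendsto_one_div_add_atTop_nhds_zero_nat.const_mul M
    simpa [div_eq_mul_inv, one_div] using this
  have hptend : ∀ i, Tendsto (fun j => p (σ j) i) atTop (𝓝 0) := by
    intro i
    refine squeeze_zero_norm (fun j => ?_) hb2M
    calc ‖p (σ j) i‖ ≤ 2 * M / ((σ j : ℝ) + 1) := hpn (σ j) i
      _ ≤ 2 * M / ((j : ℝ) + 1) := by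
        apply div_le_div_of_nonneg_left (by linarith) (by positivity) (hσge j)
  have hxtend : Tendsto (fun j => xb (σ j)) atTop (𝓝 0) := by
    refine squeeze_zero_norm (fun j => ?_) hbM
    calc ‖xb (σ j)‖ ≤ M / ((σ j : ℝ) + 1) := hxbn (σ j)
      _ ≤ M / ((j : ℝ) + 1) := by
        apply div_le_div_of_nonneg_left hMnn (by positivity) (hσge j)
  refine ⟨L, fun i => ?_, ?_⟩
  · -- membership in the limiting normal cone
    exact ⟨fun _ => 0, fun j => p (σ j) i,
      fun j => (((σ j : ℝ) + 1) * c i) • (xb (σ j) - p (σ j) i),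
      fun j => le_refl 0, tendsto_const_nhds, fun j => hpmem (σ j) i, hptend i, hLi i,
      fun j => hnormal (σ j) i⟩
  · -- the series sums to v
    have hLnorm : ∀ i, ‖L i‖ ≤ c i * M := by
      intro i
      rw [Set.mem_univ_pi] at hLmem
      exact mem_closedBall_zero_iff.1 (hLmem i)
    have hLsummable : Summable L :=
      Summable.of_norm (Summable.of_nonneg_of_le (fun i => norm_nonneg _) hLnorm
        (hc.mul_right M))
    have hw : HasSum L (∑' i, L i) := hLsummable.hasSum
    suffices hvw : v = ∑' i, L i by rw [hvw]; exact hw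
    have htail : ∀ (mf k : ℕ),
        ‖(v - xb k) - ∑ i ∈ Finset.range mf, ((k + 1 : ℝ) * c i) • (xb k - p k i)‖
          ≤ (1/2 : ℝ) ^ mf * (2 * M) := by
      intro mf k
      have hsummk : Summable (fun i => ((k + 1 : ℝ) * c i) • (xb k - p k i)) :=
        (hsum k).summable
      have htsum : ∑' i, ((k + 1 : ℝ) * c i) • (xb k - p k i) = v - xb k := (hsum k).tsum_eq
      have heq : (v - xb k) - ∑ i ∈ Finset.range mf, ((k + 1 : ℝ) * c i) • (xb k - p k i)
          = ∑' i, ((k + 1 : ℝ) * c (i + mf)) • (xb k - p k (i + mf)) := by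
        rw [← htsum, ← Summable.sum_add_tsum_nat_add mf hsummk]
        exact add_sub_cancel_left _ _
      rw [heq]
      have hcshift : Summable (fun i => c (i + mf) * M) :=
        (summable_nat_add_iff mf).2 (hc.mul_right M)
      have hnorms : Summable (fun i => ‖((k + 1 : ℝ) * c (i + mf)) • (xb k - p k (i + mf))‖) :=
        Summable.of_nonneg_of_le (fun i => norm_nonneg _) (fun i => hynorm k (i + mf)) hcshift
      calc ‖∑' i, ((k + 1 : ℝ) * c (i + mf)) • (xb k - p k (i + mf))‖
          ≤ ∑' i, ‖((k + 1 : ℝ) * c (i + mf)) • (xb k - p k (i + mf))‖ :=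
            norm_tsum_le_tsum_norm hnorms
        _ ≤ ∑' i, c (i + mf) * M := Summable.tsum_le_tsum (fun i => hynorm k (i + mf)) hnorms hcshift
        _ = (1/2 : ℝ) ^ mf * (2 * M) := by
            have hci : ∀ i, c (i + mf) * M = (1/2 : ℝ) ^ mf * (c i * M) := by
              intro i
              simp only [hcdef]
              rw [pow_add]
              ring
            rw [tsum_congr hci, tsum_mul_left, tsum_mul_right, hcsum]
            try ring
    have hlim1 : ∀ mf : ℕ, ‖v - ∑ i ∈ Finset.range mf, L i‖ ≤ (1/2 : ℝ) ^ mf * (2 * M) := by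
      intro mf
      have htends : Tendsto (fun j => (v - xb (σ j)) - ∑ i ∈ Finset.range mf,
          (((σ j : ℝ) + 1) * c i) • (xb (σ j) - p (σ j) i)) atTop
          (𝓝 ((v - 0) - ∑ i ∈ Finset.range mf, L i)) := by
        refine Tendsto.sub (tendsto_const_nhds.sub hxtend) ?_
        exact tendsto_finset_sum _ (fun i _ => hLi i)
      have hnt := htends.norm
      rw [sub_zero] at hnt
      exact le_of_tendsto hnt (Filter.Eventually.of_forall fun j => htail mf (σ j))
    have h2 : Tendsto (fun mf => ‖v - ∑ i ∈ Finset.range mf, L i‖) atTop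
        (𝓝 ‖v - ∑' i, L i‖) := (tendsto_const_nhds.sub hw.tendsto_sum_nat).norm
    have h3 : Tendsto (fun mf : ℕ => (1/2 : ℝ) ^ mf * (2 * M)) atTop (𝓝 0) := by
      have := (tendsto_pow_atTop_nhds_zero_of_lt_one (by norm_num : (0:ℝ) ≤ 1/2)
        (by norm_num : (1/2:ℝ) < 1)).mul_const (2 * M)
      simpa using this
    have h4 : ‖v - ∑' i, L i‖ ≤ 0 := le_of_tendsto_of_tendsto' h2 h3 hlim1
    exact (sub_eq_zero.1 (norm_le_zero_iff.1 h4))
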